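/- For fixed y ∈ [0,1], the function a ↦ max(1, (1−y)² + a·y)/(1 − y + a·y) on [1, ∞) attains its minimum at a = 2 − y, where its value equals 1/(1 + y(1−y)). -/
import Mathlib


/-- For fixed `y ∈ [0,1]`, the ratio `a ↦ max(1, (1−y)² + a·y)/(1 − y + a·y)` on
`[1, ∞)` attains its minimum at `a = 2 − y`, where its value is `1/(1 + y(1−y))`. -/
theorem two_box_ratio_min_at
    (y : ℝ) (hy0 : 0 ≤ y) (hy1 : y ≤ 1) :
    (∀ a : ℝ, 1 ≤ a →
      max 1 ((1 - y) ^ 2 + a * y) / (1 - y + a * y) ≥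
        max 1 ((1 - y) ^ 2 + (2 - y) * y) / (1 - y + (2 - y) * y)) ∧
    max 1 ((1 - y) ^ 2 + (2 - y) * y) / (1 - y + (2 - y) * y) =
      1 / (1 + y * (1 - y)) := by
  have hnum : (1 - y) ^ 2 + (2 - y) * y = 1 := by ring
  have hden : 1 - y + (2 - y) * y = 1 + y * (1 - y) := by ring
  have hpos : (0:ℝ) < 1 + y * (1 - y) := by nlinarith
  have hval : max 1 ((1 - y) ^ 2 + (2 - y) * y) / (1 - y + (2 - y) * y)
      = 1 / (1 + y * (1 - y)) := by
    rw [hnum, hden, max_self]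
  refine ⟨?_, hval⟩
  intro a ha
  rw [hval]
  set d := 1 - y + a * y with hd
  have hd1 : (1:ℝ) ≤ d := by nlinarith
  have hdpos : (0:ℝ) < d := by linarith
  rcases le_or_gt d (1 + y * (1 - y)) with h | h
  · calc 1 / (1 + y * (1 - y)) ≤ 1 / d := by
          apply one_div_le_one_div_of_le hdpos h
       _ ≤ max 1 ((1 - y) ^ 2 + a * y) / d := by
          apply div_le_div_of_nonneg_right (le_max_left _ _) hdpos.le
  · calc 1 / (1 + y * (1 - y)) ≤ ((1 - y) ^ 2 + a * y) / d := by
          rw [div_le_div_iff₀ hpos hdpos]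
          nlinarith [mul_nonneg hy0 (sub_nonneg.mpr hy1)]
       _ ≤ max 1 ((1 - y) ^ 2 + a * y) / d := by
          apply div_le_div_of_nonneg_right (le_max_right _ _) hdpos.le
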